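/- For every ε > 0 and every x > 0, the function x ↦ ln(G_ε(x)) is differentiable at x with derivative (ln G_ε)'(x) = exp(x/ε)/(ε·(1 + exp(x/ε))·ln(1 + exp(x/ε))), and this derivative satisfies 1/((1 + exp(−x/ε))·(x + ε·ln 2)) < (ln G_ε)'(x) < 1/x. -/

import Mathlib

/-- For `ε > 0`, the smooth approximation `G_ε(x) = ε · ln(1 + exp(x/ε))` of `max(x, 0)`. -/
noncomputable def Geps (ε x : ℝ) : ℝ := ε * Real.log (1 + Real.exp (x / ε))

/-- The first derivative of `x ↦ ln(G_ε(x))`: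
`(ln G_ε)'(x) = exp(x/ε) / (ε·(1 + exp(x/ε))·ln(1 + exp(x/ε)))`. -/
noncomputable def logGepsDeriv (ε x : ℝ) : ℝ :=
  Real.exp (x / ε) / (ε * (1 + Real.exp (x / ε)) * Real.log (1 + Real.exp (x / ε)))

/-- For every `ε > 0` and every `x > 0`, the function `x ↦ ln(G_ε(x))`
is differentiable at `x` with derivative
`(ln G_ε)'(x) = exp(x/ε)/(ε·(1 + exp(x/ε))·ln(1 + exp(x/ε)))`, and this derivative
satisfies `1/((1 + exp(−x/ε))·(x + ε·ln 2)) < (ln G_ε)'(x) < 1/x`. -/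
theorem log_geps_hasDerivAt_and_deriv_bounds_pos (ε : ℝ) (hε : 0 < ε) (x : ℝ) (hx : 0 < x) :
    HasDerivAt (fun z : ℝ => Real.log (Geps ε z)) (logGepsDeriv ε x) x ∧
      1 / ((1 + Real.exp (-x / ε)) * (x + ε * Real.log 2)) < logGepsDeriv ε x ∧
      logGepsDeriv ε x < 1 / x := by
  have hεne : ε ≠ 0 := hε.ne'
  set u := Real.exp (x / ε) with hu
  have hu0 : (0:ℝ) < u := Real.exp_pos _
  have h1u : (0:ℝ) < 1 + u := by linarith
  have hL : 0 < Real.log (1 + u) := Real.log_pos (by linarith)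
  have ht : 0 < x / ε := div_pos hx hε
  have hu1 : 1 < u := by
    have := Real.add_one_le_exp (x / ε); rw [hu]; linarith
  -- key log facts
  have hLgt : x / ε < Real.log (1 + u) := by
    rw [Real.lt_log_iff_exp_lt h1u]; rw [hu]; linarith
  have hLlt : Real.log (1 + u) < x / ε + Real.log 2 := by
    have h2u : 1 + u < 2 * u := by linarith
    calc Real.log (1 + u) < Real.log (2 * u) := Real.log_lt_log h1u h2u
      _ = Real.log 2 + x / ε := by rw [Real.log_mul (by norm_num) hu0.ne', hu, Real.log_exp]
      _ = x / ε + Real.log 2 := by ring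
  constructor
  · -- derivative
    have hG : 0 < Geps ε x := by
      unfold Geps; exact mul_pos hε hL
    have h1 : HasDerivAt (fun z : ℝ => z / ε) (1 / ε) x := by
      simpa using (hasDerivAt_id x).div_const ε
    have h2 : HasDerivAt (fun z : ℝ => Real.exp (z / ε)) (u * (1 / ε)) x := h1.exp
    have h3 : HasDerivAt (fun z : ℝ => 1 + Real.exp (z / ε)) (u * (1 / ε)) x :=
      by simpa using h2
    have h4 : HasDerivAt (fun z : ℝ => Real.log (1 + Real.exp (z / ε)))
        (u * (1 / ε) / (1 + u)) x := h3.log h1u.ne'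
    have h5 : HasDerivAt (fun z : ℝ => Geps ε z)
        (ε * (u * (1 / ε) / (1 + u))) x := h4.const_mul ε
    have h6 := h5.log hG.ne'
    convert h6 using 1
    unfold Geps logGepsDeriv
    field_simp
    ring
  constructor
  · -- lower bound
    have hd1 : 0 < (1 + Real.exp (-x / ε)) * (x + ε * Real.log 2) := by
      have : 0 < x + ε * Real.log 2 := by
        have := Real.log_pos (by norm_num : (1:ℝ) < 2); nlinarith
      positivity
    have hd2 : 0 < ε * (1 + u) * Real.log (1 + u) := by positivity
    rw [show logGepsDeriv ε x = u / (ε * (1 + u) * Real.log (1 + u)) from rfl,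
      div_lt_div_iff₀ hd1 hd2]
    have hexpneg : Real.exp (-x / ε) = 1 / u := by
      rw [hu, neg_div, Real.exp_neg, one_div]
    rw [hexpneg]
    have key : ε * Real.log (1 + u) < x + ε * Real.log 2 := by
      have := mul_lt_mul_of_pos_left hLlt hε
      calc ε * Real.log (1 + u) < ε * (x / ε + Real.log 2) := this
        _ = x + ε * Real.log 2 := by field_simp
    have h1u' : (1 + 1 / u) * u = 1 + u := by field_simp; ring
    nlinarith [mul_pos hu0 (sub_pos.mpr key), mul_lt_mul_of_pos_left key hu0]
  · -- upper bound
    have hd2 : 0 < ε * (1 + u) * Real.log (1 + u) := by positivity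
    rw [show logGepsDeriv ε x = u / (ε * (1 + u) * Real.log (1 + u)) from rfl,
      div_lt_div_iff₀ hd2 hx]
    have key : x * u < ε * (1 + u) * Real.log (1 + u) := by
      have h1 : x = ε * (x / ε) := by field_simp
      nlinarith [mul_lt_mul_of_pos_left hLgt hε, mul_pos hε (sub_pos.mpr hLgt)]
    linarith
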